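/- For every p ∈ ℤ and β ∈ ℝ \ {0}, the integral I_{p,β} := ∫₀¹ e^{4πi p t + 2iβ ln|cos(2πt)|} dt satisfies |I_{p,β}|² = β·tanh(πβ)/(π(p² + β²)); in particular I_{p,β} ≠ 0. -/

import Mathlib

/-- The integral `I_{p,β}` from the paper. -/
noncomputable def Ipb (p : ℤ) (β : ℝ) : ℂ :=
  ∫ t in (0 : ℝ)..1,
    Complex.exp (4 * Real.pi * Complex.I * (p : ℂ) * (t : ℂ)
      + 2 * Complex.I * (β : ℂ) * (Real.log |Real.cos (2 * Real.pi * t)| : ℂ))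

open MeasureTheory intervalIntegral Real Complex Set Filter

namespace IpbAux

noncomputable def w (β : ℝ) (θ : ℝ) : ℂ :=
  Complex.exp (2 * Complex.I * β * Real.log (Real.cos θ))

lemma norm_w (β θ : ℝ) : ‖w β θ‖ = 1 := by
  rw [w, Complex.norm_exp]
  have : (2 * Complex.I * β * (Real.log (Real.cos θ) : ℂ)).re = 0 := by
    simp [Complex.mul_re, Complex.mul_im]
  rw [this, Real.exp_zero]

lemma measurable_w (β : ℝ) : Measurable (w β) := by
  apply Complex.measurable_exp.comp
  exact (Complex.measurable_ofReal.comp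
    (Real.measurable_log.comp Real.continuous_cos.measurable)).const_mul _

lemma intInt_mul_w {ψ : ℝ → ℂ} (hψ : Continuous ψ) (β a b : ℝ) :
    IntervalIntegrable (fun θ => ψ θ * w β θ) volume a b := by
  rw [intervalIntegrable_iff]
  have hmeas : AEStronglyMeasurable (fun θ => ψ θ * w β θ) (volume.restrict (uIoc a b)) :=
    (hψ.measurable.mul (measurable_w β)).aestronglyMeasurable
  obtain ⟨M, hM⟩ : ∃ M, ∀ x ∈ uIcc a b, ‖ψ x‖ ≤ M :=
    (isCompact_uIcc.exists_bound_of_continuousOn hψ.continuousOn)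
  haveI : IsFiniteMeasure (volume.restrict (uIoc a b)) := by
    constructor
    rw [Measure.restrict_apply_univ]
    exact measure_Ioc_lt_top
  apply MeasureTheory.Integrable.mono' (integrable_const M) hmeas
  filter_upwards [ae_restrict_mem measurableSet_Ioc] with x hx
  rw [norm_mul, norm_w, mul_one]
  exact hM x (uIoc_subset_uIcc hx)

end IpbAux
namespace IpbAux

noncomputable def Cc (β a : ℝ) : ℂ :=
  ∫ θ in (0:ℝ)..(π/2), (Real.cos (a*θ) : ℂ) * w β θ

noncomputable def G (β a θ : ℝ) : ℂ :=
  (Real.cos θ : ℂ) * w β θ * (Real.sin ((a+1)*θ) : ℂ)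

lemma hasDerivAt_G (β a : ℝ) {θ : ℝ} (hθ : θ ∈ Ioo 0 (π/2)) :
    HasDerivAt (G β a)
      (((a:ℂ) - 2*Complex.I*β)/2 * (Real.cos (a*θ) : ℂ) * w β θ
        + ((a:ℂ) + 2*Complex.I*β + 2)/2 * (Real.cos ((a+2)*θ) : ℂ) * w β θ) θ := by
  have hcos : 0 < Real.cos θ := Real.cos_pos_of_mem_Ioo ⟨by linarith [hθ.1, Real.pi_pos], hθ.2⟩
  have hne : Real.cos θ ≠ 0 := ne_of_gt hcos
  have h2 : HasDerivAt (fun t => Real.log (Real.cos t)) ((Real.cos θ)⁻¹ * (-Real.sin θ)) θ :=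
    (Real.hasDerivAt_log hne).comp θ (Real.hasDerivAt_cos θ)
  have h4 : HasDerivAt (fun t => 2*Complex.I*(β:ℂ) * ((Real.log (Real.cos t) : ℝ) : ℂ))
      (2*Complex.I*β * (((Real.cos θ)⁻¹ * (-Real.sin θ) : ℝ) : ℂ)) θ :=
    (h2.ofReal_comp).const_mul _
  have h5 : HasDerivAt (w β) (w β θ * (2*Complex.I*β * (((Real.cos θ)⁻¹ * (-Real.sin θ) : ℝ) : ℂ))) θ := by
    unfold w
    simpa using h4.cexp
  have h6 : HasDerivAt (fun t : ℝ => ((Real.cos t : ℝ) : ℂ)) (-Real.sin θ : ℝ) θ :=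
    (Real.hasDerivAt_cos θ).ofReal_comp
  have h7 := h6.mul h5
  have hmul : HasDerivAt (fun t : ℝ => (a+1)*t) (a+1) θ := by
    simpa using (hasDerivAt_id θ).const_mul (a+1)
  have h8r : HasDerivAt (fun t : ℝ => Real.sin ((a+1)*t)) (Real.cos ((a+1)*θ) * (a+1)) θ :=
    (Real.hasDerivAt_sin ((a+1)*θ)).comp θ hmul
  have h8 : HasDerivAt (fun t : ℝ => ((Real.sin ((a+1)*t) : ℝ) : ℂ))
      ((Real.cos ((a+1)*θ) * (a+1) : ℝ) : ℂ) θ := h8r.ofReal_comp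
  have hG := h7.mul h8
  refine hG.congr_deriv ?_
  simp only [Pi.mul_apply]
  have e1 : a*θ = (a+1)*θ - θ := by ring
  have e2 : (a+2)*θ = (a+1)*θ + θ := by ring
  rw [e1, e2, Real.cos_sub, Real.cos_add]
  have hcne : Complex.cos (θ:ℂ) ≠ 0 := by
    rw [← Complex.ofReal_cos]
    exact_mod_cast hne
  push_cast
  field_simp
  ring

lemma G_recursion (β a : ℝ) :
    ((a:ℂ) - 2*Complex.I*β)/2 * Cc β a + ((a:ℂ) + 2*Complex.I*β + 2)/2 * Cc β (a+2) = 0 := by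
  have hπ : (0:ℝ) ≤ π/2 := by positivity
  have hint1 : IntervalIntegrable
      (fun θ => ((a:ℂ) - 2*Complex.I*β)/2 * (Real.cos (a*θ) : ℂ) * w β θ) volume 0 (π/2) := by
    have := intInt_mul_w (ψ := fun θ => ((a:ℂ) - 2*Complex.I*β)/2 * (Real.cos (a*θ) : ℂ))
      (by continuity) β 0 (π/2)
    simpa using this
  have hint2 : IntervalIntegrable
      (fun θ => ((a:ℂ) + 2*Complex.I*β + 2)/2 * (Real.cos ((a+2)*θ) : ℂ) * w β θ) volume 0 (π/2) := by
    have := intInt_mul_w (ψ := fun θ => ((a:ℂ) + 2*Complex.I*β + 2)/2 * (Real.cos ((a+2)*θ) : ℂ))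
      (by continuity) β 0 (π/2)
    simpa using this
  have hcont : ContinuousOn (G β a) (Icc 0 (π/2)) := by
    intro x hx
    rcases eq_or_lt_of_le hx.2 with h | h
    · -- x = π/2 : squeeze
      have hG0 : G β a (π/2) = 0 := by simp [G]
      subst h
      unfold ContinuousWithinAt
      rw [hG0]
      refine squeeze_zero_norm (a := fun θ => |Real.cos θ|) (fun t => ?_) ?_
      · rw [G, norm_mul, norm_mul, norm_w, mul_one]
        calc ‖((Real.cos t : ℝ) : ℂ)‖ * ‖((Real.sin ((a+1)*t) : ℝ):ℂ)‖
            ≤ |Real.cos t| * 1 := by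
              rw [Complex.norm_real, Complex.norm_real, Real.norm_eq_abs, Real.norm_eq_abs]
              exact mul_le_mul_of_nonneg_left (Real.abs_sin_le_one _) (abs_nonneg _)
          _ = |Real.cos t| := mul_one _
      · have : Tendsto (fun θ : ℝ => |Real.cos θ|) (nhds (π/2)) (nhds |Real.cos (π/2)|) :=
          (Real.continuous_cos.abs).tendsto _
        rw [Real.cos_pi_div_two, abs_zero] at this
        exact this.mono_left nhdsWithin_le_nhds
    · -- x < π/2 : continuous at
      have hcos : 0 < Real.cos x := Real.cos_pos_of_mem_Ioo ⟨by linarith [hx.1], h⟩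
      have : ContinuousAt (G β a) x := by
        apply ContinuousAt.mul
        apply ContinuousAt.mul
        · exact (Complex.continuous_ofReal.comp Real.continuous_cos).continuousAt
        · apply Complex.continuous_exp.continuousAt.comp
          apply ContinuousAt.mul continuousAt_const
          exact Complex.continuous_ofReal.continuousAt.comp
            ((Real.continuousAt_log (ne_of_gt hcos)).comp Real.continuous_cos.continuousAt)
        · exact (Complex.continuous_ofReal.comp
            (Real.continuous_sin.comp (continuous_const.mul continuous_id))).continuousAt
      exact this.continuousWithinAt
  have key := intervalIntegral.integral_eq_sub_of_hasDerivAt_of_le hπ hcont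
    (fun x hx => hasDerivAt_G β a hx) (hint1.add hint2)
  have hG0 : G β a 0 = 0 := by simp [G]
  have hGπ : G β a (π/2) = 0 := by simp [G]
  rw [hG0, hGπ, sub_zero] at key
  rw [intervalIntegral.integral_add hint1 hint2] at key
  have r1 : ∀ c : ℂ, ∀ b : ℝ, (∫ θ in (0:ℝ)..(π/2), c * (Real.cos (b*θ) : ℂ) * w β θ)
      = c * Cc β b := by
    intro c b
    rw [Cc, ← intervalIntegral.integral_const_mul]
    congr 1; ext θ; ring
  rw [r1, r1] at key
  exact key

end IpbAux

namespace IpbAux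

noncomputable def H (p : ℤ) (β : ℝ) (θ : ℝ) : ℂ :=
  Complex.exp (2*Complex.I*(p:ℂ)*(θ:ℂ)) * w β θ

lemma H_int (p : ℤ) (β a b : ℝ) : IntervalIntegrable (H p β) volume a b := by
  apply intInt_mul_w _ β a b
  exact Complex.continuous_exp.comp (by continuity)

lemma exp_two_pi_I_int (p : ℤ) : Complex.exp (2*Complex.I*(p:ℂ)*(π:ℂ)) = 1 := by
  have : (2*Complex.I*(p:ℂ)*(π:ℂ)) = (p:ℂ) * (2*(π:ℂ)*Complex.I) := by ring
  rw [this, Complex.exp_int_mul_two_pi_mul_I]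

lemma w_pi_sub (β x : ℝ) : w β (π - x) = w β x := by
  simp only [w, Real.cos_pi_sub, Real.log_neg_eq_log]

lemma H_periodic (p : ℤ) (β : ℝ) : Function.Periodic (H p β) π := by
  intro x
  have h1 : w β (x + π) = w β x := by
    simp only [w, Real.cos_add_pi, Real.log_neg_eq_log]
  have h2 : Complex.exp (2*Complex.I*(p:ℂ)*((x:ℝ)+(π:ℝ) : ℝ)) =
      Complex.exp (2*Complex.I*(p:ℂ)*(x:ℂ)) := by
    push_cast
    rw [show 2*Complex.I*(p:ℂ)*((x:ℂ)+(π:ℂ)) =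
      2*Complex.I*(p:ℂ)*(x:ℂ) + 2*Complex.I*(p:ℂ)*(π:ℂ) by ring, Complex.exp_add,
      exp_two_pi_I_int, mul_one]
  simp only [H, h1, h2]

lemma Ipb_eq (p : ℤ) (β : ℝ) : Ipb p β = (2/π) * Cc β (2*p) := by
  have hπ : (π:ℝ) ≠ 0 := Real.pi_ne_zero
  have h2π : (2*π : ℝ) ≠ 0 := by positivity
  -- Step 1 : integrand is H (2πt)
  have step1 : Ipb p β = ∫ t in (0:ℝ)..1, H p β (2*π*t) := by
    rw [Ipb]
    congr 1; ext t
    rw [H, w, ← Complex.exp_add, Real.log_abs]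
    congr 1
    push_cast
    ring
  -- Step 2 : substitution
  have step2 : (∫ t in (0:ℝ)..1, H p β (2*π*t)) = (2*π:ℝ)⁻¹ • ∫ θ in (0:ℝ)..(2*π), H p β θ := by
    rw [intervalIntegral.integral_comp_mul_left _ h2π]
    norm_num
  -- Step 3 : periodicity
  have step3 : (∫ θ in (0:ℝ)..(2*π), H p β θ) = 2 * ∫ θ in (0:ℝ)..π, H p β θ := by
    have hsplit := intervalIntegral.integral_add_adjacent_intervals
      (H_int p β 0 π) (H_int p β π (2*π))
    have hper : (∫ θ in (π:ℝ)..(π+π), H p β θ) = ∫ θ in (0:ℝ)..(0+π), H p β θ :=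
      (H_periodic p β).intervalIntegral_add_eq π 0
    rw [show (π + π : ℝ) = 2*π by ring, zero_add] at hper
    rw [← hsplit, hper]
    ring
  -- Step 4 : reflection
  have step4 : (∫ θ in (0:ℝ)..π, H p β θ) = 2 * Cc β (2*p) := by
    have hsplit := intervalIntegral.integral_add_adjacent_intervals
      (H_int p β 0 (π/2)) (H_int p β (π/2) π)
    have hrefl : (∫ x in (0:ℝ)..(π/2), H p β (π - x)) = ∫ θ in (π/2:ℝ)..π, H p β θ := by
      rw [intervalIntegral.integral_comp_sub_left (H p β) π]
      rw [show (π - π/2 : ℝ) = π/2 by ring, show (π - 0 : ℝ) = π by ring]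
    have key : (∫ x in (0:ℝ)..(π/2), H p β x + H p β (π - x))
        = ∫ x in (0:ℝ)..(π/2), 2 * (Real.cos (2*p*x) : ℂ) * w β x := by
      congr 1; ext x
      rw [H, H, w_pi_sub]
      have : Complex.exp (2*Complex.I*(p:ℂ)*((π - x : ℝ):ℂ))
          = Complex.exp (-(2*Complex.I*(p:ℂ)*(x:ℂ))) := by
        push_cast
        rw [show 2*Complex.I*(p:ℂ)*((π:ℂ) - x) =
          2*Complex.I*(p:ℂ)*(π:ℂ) + -(2*Complex.I*(p:ℂ)*(x:ℂ)) by ring, Complex.exp_add,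
          exp_two_pi_I_int, one_mul]
      rw [this, ← add_mul]
      congr 1
      have harg : 2*Complex.I*(p:ℂ)*(x:ℂ) = ((2*p*x : ℝ) : ℂ) * Complex.I := by
        push_cast; ring
      rw [harg, Complex.exp_mul_I, ← neg_mul, Complex.exp_mul_I, Complex.cos_neg,
        Complex.sin_neg, Complex.ofReal_cos]
      ring
    have hint2' : (∫ x in (0:ℝ)..(π/2), H p β (π - x)) = ∫ θ in (π/2:ℝ)..π, H p β θ := hrefl
    have hHrefl_int : IntervalIntegrable (fun x => H p β (π - x)) volume 0 (π/2) := by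
      have := (H_int p β (π/2) π).comp_sub_left π
      rw [show (π - π/2 : ℝ) = π/2 by ring] at this
      simpa using this.symm
    rw [← hsplit, ← hint2', ← intervalIntegral.integral_add (H_int p β 0 (π/2)) hHrefl_int, key]
    rw [Cc, ← intervalIntegral.integral_const_mul]
    simp_rw [mul_assoc]
  rw [step1, step2, step3, step4]
  rw [Complex.real_smul]
  push_cast
  field_simp

end IpbAux
namespace IpbAux

lemma Cc_neg (β a : ℝ) : Cc β (-a) = Cc β a := by
  simp only [Cc, neg_mul, Real.cos_neg]

lemma rec2 (β n : ℝ) :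
    ((n:ℂ) + 1 + Complex.I*β) * Cc β (2*n+2) = (Complex.I*β - n) * Cc β (2*n) := by
  have key := G_recursion β (2*n)
  rw [show (2*n+2 : ℝ) = 2*n+2 by ring] at key
  push_cast at key
  linear_combination key

lemma normSq_Cc (β : ℝ) (n : ℕ) :
    Complex.normSq (Cc β (2*n)) * (β^2 + (n:ℝ)^2) = β^2 * Complex.normSq (Cc β 0) := by
  induction n with
  | zero => norm_num; ring
  | succ n ih =>
    have h := rec2 β n
    have h2 := congrArg Complex.normSq h
    rw [Complex.normSq_mul, Complex.normSq_mul] at h2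
    have e1 : Complex.normSq (((n:ℝ):ℂ) + 1 + Complex.I*β) = ((n:ℝ)+1)^2 + β^2 := by
      simp [Complex.normSq_apply]
      ring
    have e2 : Complex.normSq (Complex.I*(β:ℂ) - ((n:ℝ):ℂ)) = (n:ℝ)^2 + β^2 := by
      simp [Complex.normSq_apply]
      ring
    rw [e1, e2] at h2
    have harg : (2*((n:ℕ)+1:ℕ) : ℝ) = 2*(n:ℝ)+2 := by push_cast; ring
    rw [harg]
    push_cast
    linear_combination h2 + ih

lemma normSq_Cc_int (β : ℝ) (p : ℤ) :
    Complex.normSq (Cc β (2*p)) * (β^2 + (p:ℝ)^2) = β^2 * Complex.normSq (Cc β 0) := by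
  rcases Int.natAbs_eq p with h | h
  · rw [h]
    exact_mod_cast normSq_Cc β p.natAbs
  · rw [h]
    rw [show ((((-(p.natAbs:ℤ)):ℤ)):ℝ) = -((p.natAbs:ℕ):ℝ) by rw [Int.cast_neg, Int.cast_natCast]]
    rw [show (2 * -((p.natAbs:ℕ):ℝ)) = -(2*((p.natAbs:ℕ):ℝ)) by ring, Cc_neg]
    rw [show ((-((p.natAbs:ℕ):ℝ))^2 : ℝ) = (((p.natAbs:ℕ):ℝ))^2 by ring]
    exact normSq_Cc β p.natAbs

end IpbAux
namespace IpbAux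

lemma pointwise_subst (β : ℝ) {x : ℝ} (hs : 0 < Real.sin x) (hc : 0 < Real.cos x) :
    (2 * Real.sin x * Real.cos x) •
      ((((Real.sin x ^ 2 : ℝ)):ℂ) ^ ((1/2 : ℂ) - 1)
        * ((1:ℂ) - ((Real.sin x ^ 2 : ℝ):ℂ)) ^ ((1/2 + Complex.I*β) - 1))
      = 2 * w β x := by
  have hsne := hs.ne'
  have hcne := hc.ne'
  -- first factor
  have hA : (((Real.sin x ^ 2 : ℝ)):ℂ) ^ ((1/2 : ℂ) - 1) = (((Real.sin x)⁻¹ : ℝ) : ℂ) := by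
    rw [show ((1/2 : ℂ) - 1) = ((-(1/2) : ℝ) : ℂ) by norm_num,
      ← Complex.ofReal_cpow (sq_nonneg _)]
    congr 1
    rw [← Real.rpow_natCast (Real.sin x) 2, ← Real.rpow_mul hs.le]
    norm_num [Real.rpow_neg_one]
  -- second factor
  have hB : ((1:ℂ) - ((Real.sin x ^ 2 : ℝ):ℂ)) ^ ((1/2 + Complex.I*β) - 1)
      = w β x * (((Real.cos x)⁻¹ : ℝ) : ℂ) := by
    have h1 : ((1:ℂ) - ((Real.sin x ^ 2 : ℝ):ℂ)) = ((Real.cos x ^ 2 : ℝ) : ℂ) := by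
      rw [Real.cos_sq']
      push_cast
      ring
    rw [h1]
    have h2 : ((Real.cos x ^ 2 : ℝ) : ℂ) ≠ 0 := by
      simp only [ne_eq, Complex.ofReal_eq_zero]
      positivity
    rw [Complex.cpow_def_of_ne_zero h2, ← Complex.ofReal_log (by positivity),
      Real.log_pow]
    have h3 : ((((2:ℕ) * Real.log (Real.cos x) : ℝ)) : ℂ) * (1/2 + Complex.I*β - 1)
        = 2*Complex.I*β*(Real.log (Real.cos x) : ℂ) + (-(Real.log (Real.cos x)) : ℝ) := by
      push_cast
      ring
    rw [h3, Complex.exp_add, ← Complex.ofReal_exp, Real.exp_neg, Real.exp_log hc]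
    rfl
  rw [hA, hB]
  rw [Complex.real_smul]
  have h1 : Complex.sin (x:ℂ) ≠ 0 := by
    rw [← Complex.ofReal_sin]
    exact_mod_cast hsne
  have h2 : Complex.cos (x:ℂ) ≠ 0 := by
    rw [← Complex.ofReal_cos]
    exact_mod_cast hcne
  push_cast
  field_simp

lemma beta_eq (β : ℝ) :
    Complex.betaIntegral (1/2) (1/2 + Complex.I*β) = 2 * Cc β 0 := by
  have hπ2 : (0:ℝ) ≤ π/2 := by positivity
  set g : ℝ → ℂ := fun x => (x:ℂ) ^ ((1/2 : ℂ) - 1) * ((1:ℂ) - (x:ℂ)) ^ ((1/2 + Complex.I*β) - 1)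
    with hg
  have hgint : IntervalIntegrable g volume 0 1 := by
    apply Complex.betaIntegral_convergent <;> simp
  set f : ℝ → ℝ := fun x => Real.sin x ^ 2 with hf
  have hmem : ∀ x ∈ Ioo (0:ℝ) (π/2), Real.sin x ^ 2 ∈ Ioo (0:ℝ) 1 := by
    intro x hx
    have hs : 0 < Real.sin x := Real.sin_pos_of_pos_of_lt_pi hx.1 (by linarith [Real.pi_pos, hx.2])
    have hs1 : Real.sin x < 1 := by
      have := Real.cos_pos_of_mem_Ioo (⟨by linarith [Real.pi_pos, hx.1], hx.2⟩ :
        x ∈ Ioo (-(π/2)) (π/2))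
      nlinarith [Real.sin_sq_add_cos_sq x]
    constructor
    · positivity
    · nlinarith
  have hfc : ContinuousOn f (uIcc 0 (π/2)) := (Real.continuous_sin.pow 2).continuousOn
  have hff' : ∀ x ∈ Ioo (min (0:ℝ) (π/2)) (max 0 (π/2)),
      HasDerivWithinAt f (2 * Real.sin x * Real.cos x) (Ioi x) x := by
    intro x _
    have : HasDerivAt f (2 * Real.sin x * Real.cos x) x := by
      have := ((Real.hasDerivAt_sin x).pow 2)
      exact (by simpa [mul_comm, mul_assoc, pow_one] using this :
        HasDerivAt (Real.sin ^ 2) (2 * Real.sin x * Real.cos x) x)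
    exact this.hasDerivWithinAt
  have hgcont : ContinuousOn g (f '' Ioo (min (0:ℝ) (π/2)) (max 0 (π/2))) := by
    have himg : f '' Ioo (min (0:ℝ) (π/2)) (max 0 (π/2)) ⊆ Ioo (0:ℝ) 1 := by
      rintro y ⟨x, hx, rfl⟩
      exact hmem x (by simpa [min_eq_left hπ2, max_eq_right hπ2] using hx)
    apply ContinuousOn.mono _ himg
    apply ContinuousOn.mul
    · intro y hy
      exact (continuousAt_ofReal_cpow_const y _ (Or.inr hy.1.ne')).continuousWithinAt
    · intro y hy
      have hb : ((1:ℂ) - (y:ℂ)) ∈ Complex.slitPlane := by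
        rw [Complex.mem_slitPlane_iff]
        left
        simp only [Complex.sub_re, Complex.one_re, Complex.ofReal_re]
        linarith [hy.2]
      exact (ContinuousAt.cpow
        ((continuous_const.sub Complex.continuous_ofReal).continuousAt)
        continuousAt_const hb).continuousWithinAt
  have hgint1 : IntegrableOn g (f '' uIcc (0:ℝ) (π/2)) := by
    apply MeasureTheory.IntegrableOn.mono_set
      ((intervalIntegrable_iff_integrableOn_Icc_of_le (by norm_num)).mp hgint)
    rintro y ⟨x, _, rfl⟩
    simp only [hf]
    refine ⟨by positivity, ?_⟩
    have h1 := Real.neg_one_le_sin x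
    have h2 := Real.sin_le_one x
    nlinarith
  have haeq : ∀ᵐ x : ℝ, x ∈ Ioo (0:ℝ) (π/2) →
      (fun x => (2 * Real.sin x * Real.cos x) • (g ∘ f) x) x = 2 * w β x := by
    filter_upwards with x hx
    have hs : 0 < Real.sin x := Real.sin_pos_of_pos_of_lt_pi hx.1 (by linarith [Real.pi_pos, hx.2])
    have hc : 0 < Real.cos x :=
      Real.cos_pos_of_mem_Ioo ⟨by linarith [Real.pi_pos, hx.1], hx.2⟩
    exact pointwise_subst β hs hc
  have h2w : IntegrableOn (fun x => 2 * w β x) (Icc (0:ℝ) (π/2)) := by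
    have := intInt_mul_w (ψ := fun _ => (2:ℂ)) continuous_const β 0 (π/2)
    exact (intervalIntegrable_iff_integrableOn_Icc_of_le hπ2).mp this
  have hgint2 : IntegrableOn (fun x => (2 * Real.sin x * Real.cos x) • (g ∘ f) x)
      (uIcc (0:ℝ) (π/2)) := by
    rw [uIcc_of_le hπ2]
    have h2w' := h2w.congr_set_ae Ioo_ae_eq_Icc
    have hF : IntegrableOn (fun x => (2 * Real.sin x * Real.cos x) • (g ∘ f) x)
        (Ioo (0:ℝ) (π/2)) := by
      apply MeasureTheory.Integrable.congr h2w'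
      filter_upwards [ae_restrict_mem measurableSet_Ioo, ae_restrict_of_ae haeq]
        with x hx h using (h hx).symm
    exact hF.congr_set_ae Ioo_ae_eq_Icc.symm
  have key := intervalIntegral.integral_comp_smul_deriv''' hfc hff' hgcont hgint1 hgint2
  have hf0 : f 0 = 0 := by simp [hf]
  have hfπ : f (π/2) = 1 := by simp [hf]
  rw [hf0, hfπ] at key
  have lhs_eq : (∫ x in (0:ℝ)..(π/2), (2 * Real.sin x * Real.cos x) • (g ∘ f) x)
      = ∫ x in (0:ℝ)..(π/2), 2 * w β x := by
    apply intervalIntegral.integral_congr_ae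
    have hne : ∀ᵐ x : ℝ, x ≠ π/2 := by
      have : ({(π/2:ℝ)} : Set ℝ)ᶜ ∈ ae (volume : Measure ℝ) :=
        compl_mem_ae_iff.mpr (measure_singleton _)
      filter_upwards [this] with x hx using hx
    rw [uIoc_of_le hπ2]
    filter_upwards [haeq, hne] with x h hxne hx
    exact h ⟨hx.1, lt_of_le_of_ne hx.2 hxne⟩
  have hbeta : Complex.betaIntegral (1/2) (1/2 + Complex.I*β) = ∫ u in (0:ℝ)..1, g u := rfl
  rw [hbeta, ← key, lhs_eq, intervalIntegral.integral_const_mul, Cc]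
  congr 1
  apply intervalIntegral.integral_congr
  intro θ _
  norm_num

end IpbAux
namespace IpbAux

open ComplexConjugate

lemma normSq_Cc0 (β : ℝ) (hβ : β ≠ 0) :
    Complex.normSq (Cc β 0) = π * Real.tanh (π*β) / (4*β) := by
  have hβC : (Complex.I * β) ≠ 0 := by
    simp [Complex.ext_iff, hβ]
  set B := Complex.betaIntegral (1/2) (1/2 + Complex.I*β) with hB
  have h1 : Complex.Gamma (1/2) * Complex.Gamma (1/2 + Complex.I*β)
      = Complex.Gamma (1 + Complex.I*β) * B := by
    have := Complex.Gamma_mul_Gamma_eq_betaIntegral (s := 1/2) (t := 1/2 + Complex.I*β)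
      (by norm_num) (by simp)
    rw [show ((1:ℂ)/2 + (1/2 + Complex.I*β)) = 1 + Complex.I*β by ring] at this
    exact this
  have h2 : Complex.Gamma (1/2) * Complex.Gamma (1/2 - Complex.I*β)
      = Complex.Gamma (1 - Complex.I*β) * conj B := by
    have := congrArg conj h1
    simpa [← Complex.Gamma_conj, map_add, map_sub, map_mul, map_div₀, map_one, map_inv₀,
      map_ofNat, Complex.conj_I, Complex.conj_ofReal, sub_eq_add_neg, mul_comm] using this
  have hmul := congrArg₂ (· * ·) h1 h2
  -- evaluate the Gamma products
  have e3 : Complex.Gamma (1/2) * Complex.Gamma (1/2) = (π:ℂ) := by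
    rw [Complex.Gamma_one_half_eq,
      ← Complex.cpow_add _ _ (by exact_mod_cast Real.pi_ne_zero : (π:ℂ) ≠ 0)]
    norm_num
  have e1 : Complex.Gamma (1/2 + Complex.I*β) * Complex.Gamma (1/2 - Complex.I*β)
      = (π:ℂ) / (Real.cosh (π*β) : ℂ) := by
    have := Complex.Gamma_mul_Gamma_one_sub (1/2 + Complex.I*β)
    rw [show ((1:ℂ) - (1/2 + Complex.I*β)) = 1/2 - Complex.I*β by ring] at this
    rw [this]
    congr 1
    rw [show ((π:ℂ) * (1/2 + Complex.I*β)) = π/2 + ((π*β : ℝ):ℂ)*Complex.I by push_cast; ring]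
    rw [Complex.sin_add, Complex.sin_pi_div_two, Complex.cos_pi_div_two, Complex.cos_mul_I]
    simp [Complex.ofReal_cosh]
  have e2 : Complex.Gamma (1 + Complex.I*β) * Complex.Gamma (1 - Complex.I*β)
      = ((π*β : ℝ):ℂ) / (Real.sinh (π*β) : ℂ) := by
    have hrefl := Complex.Gamma_mul_Gamma_one_sub (Complex.I*β)
    have hadd : Complex.Gamma (Complex.I*β + 1) = Complex.I*β * Complex.Gamma (Complex.I*β) :=
      Complex.Gamma_add_one _ hβC
    rw [show ((1:ℂ) + Complex.I*β) = Complex.I*β + 1 by ring, hadd, mul_assoc, hrefl]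
    have hsin : Complex.sin ((π:ℂ)*(Complex.I*β)) = (Real.sinh (π*β):ℂ) * Complex.I := by
      rw [show ((π:ℂ)*(Complex.I*β)) = ((π*β:ℝ):ℂ)*Complex.I by push_cast; ring,
        Complex.sin_mul_I, Complex.ofReal_sinh]
    have hsh : (Real.sinh (π*β) : ℂ) ≠ 0 := by
      simp only [ne_eq, Complex.ofReal_eq_zero]
      rw [Real.sinh_eq_zero]
      exact mul_ne_zero Real.pi_ne_zero hβ
    rw [hsin]
    set s : ℂ := (Real.sinh (π*β) : ℂ) with hs
    calc Complex.I*(β:ℂ)*((π:ℂ)/(s*Complex.I))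
        = ((β:ℂ)*(π:ℂ)/s) * (Complex.I/Complex.I) := by ring
      _ = ((β:ℂ)*(π:ℂ)/s) := by rw [div_self Complex.I_ne_zero, mul_one]
      _ = ((π*β:ℝ):ℂ)/s := by push_cast; ring
  have hBC : B * conj B = ((Complex.normSq B : ℝ) : ℂ) := Complex.mul_conj B
  have hmul2 : (π:ℂ) * ((π:ℂ) / (Real.cosh (π*β) : ℂ))
      = ((π*β : ℝ):ℂ) / (Real.sinh (π*β) : ℂ) * ((Complex.normSq B : ℝ) : ℂ) := by
    calc (π:ℂ) * ((π:ℂ) / (Real.cosh (π*β) : ℂ))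
        = (Complex.Gamma (1/2) * Complex.Gamma (1/2))
          * (Complex.Gamma (1/2 + Complex.I*β) * Complex.Gamma (1/2 - Complex.I*β)) := by
          rw [e3, e1]
      _ = (Complex.Gamma (1/2) * Complex.Gamma (1/2 + Complex.I*β))
          * (Complex.Gamma (1/2) * Complex.Gamma (1/2 - Complex.I*β)) := by ring
      _ = (Complex.Gamma (1 + Complex.I*β) * B) * (Complex.Gamma (1 - Complex.I*β) * conj B) :=
          hmul
      _ = (Complex.Gamma (1 + Complex.I*β) * Complex.Gamma (1 - Complex.I*β)) * (B * conj B) := by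
          ring
      _ = ((π*β : ℝ):ℂ) / (Real.sinh (π*β) : ℂ) * ((Complex.normSq B : ℝ) : ℂ) := by
          rw [e2, hBC]
  have hmulR : π * (π / Real.cosh (π*β)) = (π*β) / Real.sinh (π*β) * Complex.normSq B := by
    exact_mod_cast hmul2
  have hB2 : Complex.normSq B = 4 * Complex.normSq (Cc β 0) := by
    rw [hB, beta_eq]
    rw [Complex.normSq_mul]
    norm_num
  rw [hB2] at hmulR
  have hcosh : Real.cosh (π*β) ≠ 0 := (Real.cosh_pos (x := π*β)).ne'
  have hsinh : Real.sinh (π*β) ≠ 0 := by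
    rw [ne_eq, Real.sinh_eq_zero]
    exact mul_ne_zero Real.pi_ne_zero hβ
  rw [Real.tanh_eq_sinh_div_cosh]
  field_simp at hmulR ⊢
  nlinarith [hmulR, Real.pi_pos]

end IpbAux
namespace IpbAux

theorem abs_Ipb_sq' (p : ℤ) (β : ℝ) (hβ : β ≠ 0) :
    ‖Ipb p β‖ ^ 2 = β * Real.tanh (Real.pi * β) / (Real.pi * ((p : ℝ) ^ 2 + β ^ 2))
      ∧ Ipb p β ≠ 0 := by
  have hπ := Real.pi_pos
  have hβsq : (0:ℝ) < β^2 := by positivity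
  have hsum : (0:ℝ) < β^2 + (p:ℝ)^2 := by nlinarith [sq_nonneg ((p:ℝ))]
  have hE : Complex.normSq (Cc β (2*p)) * (β^2 + (p:ℝ)^2)
      = β^2 * (π * Real.tanh (π*β) / (4*β)) := by
    rw [← normSq_Cc0 β hβ]
    exact normSq_Cc_int β p
  have hA : Complex.normSq (Cc β (2*p)) = β * π * Real.tanh (π*β) / (4*(β^2+(p:ℝ)^2)) := by
    rw [eq_div_iff (by positivity : (4*(β^2+(p:ℝ)^2)) ≠ 0)]
    field_simp at hE
    apply mul_left_cancel₀ hβ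
    rw [mul_comm β π] at hE
    linear_combination β * hE
  have habs : ‖Ipb p β‖ ^ 2
      = β * Real.tanh (Real.pi * β) / (Real.pi * ((p : ℝ) ^ 2 + β ^ 2)) := by
    rw [Complex.sq_norm, Ipb_eq, Complex.normSq_mul, hA]
    have h2π : Complex.normSq ((2:ℂ)/(π:ℂ)) = (2/π)^2 := by
      rw [show ((2:ℂ)/(π:ℂ)) = (((2/π : ℝ)):ℂ) by push_cast; ring, Complex.normSq_ofReal]
      ring
    rw [h2π]
    field_simp
    ring
  refine ⟨habs, ?_⟩
  have htanh : 0 < β * Real.tanh (π*β) := by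
    rw [Real.tanh_eq_sinh_div_cosh]
    have hcosh : 0 < Real.cosh (π*β) := Real.cosh_pos _
    rcases hβ.lt_or_gt with h | h
    · have hs : Real.sinh (π*β) < 0 := by
        rw [← Real.sinh_zero]
        apply Real.sinh_lt_sinh.mpr
        nlinarith
      have : 0 < Real.sinh (π*β) / Real.cosh (π*β) * β := by
        apply mul_pos_of_neg_of_neg _ h
        exact div_neg_of_neg_of_pos hs hcosh
      linarith [this]
    · have hs : 0 < Real.sinh (π*β) := Real.sinh_pos_iff.mpr (by nlinarith)
      have : 0 < β * (Real.sinh (π*β) / Real.cosh (π*β)) :=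
        mul_pos h (div_pos hs hcosh)
      linarith [this]
  intro h0
  rw [h0] at habs
  simp only [norm_zero] at habs
  have : 0 < β * Real.tanh (π*β) / (π * ((p:ℝ)^2 + β^2)) := by
    apply div_pos htanh
    nlinarith
  rw [← habs] at this
  norm_num at this

end IpbAux

theorem abs_Ipb_sq (p : ℤ) (β : ℝ) (hβ : β ≠ 0) :
    ‖Ipb p β‖ ^ 2 = β * Real.tanh (Real.pi * β) / (Real.pi * ((p : ℝ) ^ 2 + β ^ 2))
      ∧ Ipb p β ≠ 0 := IpbAux.abs_Ipb_sq' p β hβ
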